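/- For 0 < ε < r, s ∈ ℝ, and η a continuous nondecreasing function, with a := min(τ_y, s - r) ∨ 0, b := min(τ_y, s - ε) ∨ 0, c := min(τ_y, s + ε), d := min(τ_y, s + r), where s := τ_y + ζ for ζ ≥ 0: one has a = min(τ_y, τ_y + ζ - r) ∨ 0, b = min(τ_y, τ_y + ζ - ε) ∨ 0, c = τ_y, and d = τ_y. Consequently, η(c,d) = 0 and η(min(s,τ_y), c) = 0, so the Stieltjes integral decomposition ∫₀^{τ_y} (∂R/∂s)(t, s) dη(t) reduces to -∫_a^b (1/(s - t) - 1/r) dη(t) - (1/ε - 1/r)·η(b, τ_y). -/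

import Mathlib

open MeasureTheory

/-- The a.e. partial derivative `∂R/∂s(t,s)` (in its second variable) of the truncated
covariance `R`, evaluated as a function of `(t,s)`. -/
noncomputable def dRcov (ε r t s : ℝ) : ℝ :=
  if |s - t| ≤ ε then -(1/ε - 1/r) * Real.sign (s - t)
  else if |s - t| < r then -(1/|s - t| - 1/r) * Real.sign (s - t)
  else 0

/-- For `s = τ_y + ζ ≥ τ_y` the endpoints collapse: `c = d = τ_y`, the corresponding
increments of `η` vanish, and the Stieltjes integral of `∂R/∂s` reduces to
`-∫_a^b (1/(s-t) - 1/r) dη(t) - (1/ε - 1/r)·η(b, τ_y)`. -/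
theorem stmt15 (ε r ζ τy : ℝ) (hε : 0 < ε) (hεr : ε < r) (hζ : 0 ≤ ζ) (hτy : 0 ≤ τy)
    (η : StieltjesFunction ℝ) (hηc : Continuous η) (hηm : Monotone (η : ℝ → ℝ))
    (s a b c d : ℝ) (hs : s = τy + ζ)
    (ha : a = max (min τy (s - r)) 0) (hb : b = max (min τy (s - ε)) 0)
    (hc : c = min τy (s + ε)) (hd : d = min τy (s + r)) :
    c = τy ∧ d = τy ∧ η d - η c = 0 ∧ η c - η (min s τy) = 0 ∧
    (∫ t in Set.Ioc (0:ℝ) τy, dRcov ε r t s ∂η.measure) =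
      -(∫ t in Set.Ioc a b, (1/(s - t) - 1/r) ∂η.measure) - (1/ε - 1/r) * (η τy - η b) := by
  have hτs : τy ≤ s := by rw [hs]; linarith
  have hc' : c = τy := by rw [hc, min_eq_left]; linarith
  have hd' : d = τy := by rw [hd, min_eq_left]; linarith [hεr.le.trans (le_refl r)]
  refine ⟨hc', hd', by rw [hc', hd']; ring, by rw [hc', min_eq_right hτs]; ring, ?_⟩
  have ha0 : (0:ℝ) ≤ a := ha ▸ le_max_right _ _
  have hab : a ≤ b := by
    rw [ha, hb]
    exact max_le_max (min_le_min le_rfl (by linarith)) le_rfl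
  have hbτ : b ≤ τy := by rw [hb]; exact max_le (min_le_left _ _) hτy
  have haτ : a ≤ τy := hab.trans hbτ
  -- pointwise descriptions of dRcov on the three pieces
  have h1 : ∀ t ∈ Set.Ioc (0:ℝ) a, dRcov ε r t s = 0 := by
    rintro t ⟨ht0, hta⟩
    have htr : t ≤ s - r := by
      rcases le_total (min τy (s - r)) 0 with h | h
      · rw [ha, max_eq_right h] at hta; linarith
      · rw [ha, max_eq_left h] at hta
        exact hta.trans (min_le_right _ _)
    have habs : |s - t| = s - t := abs_of_pos (by linarith)
    simp only [dRcov, habs]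
    rw [if_neg (by linarith), if_neg (by linarith)]
  have h2 : ∀ t ∈ Set.Ioc a b, dRcov ε r t s = -(1/(s - t) - 1/r) := by
    rintro t ⟨hat, htb⟩
    have htb' : t ≤ s - ε := by
      rcases le_total (min τy (s - ε)) 0 with h | h
      · rw [hb, max_eq_right h] at htb; linarith
      · rw [hb, max_eq_left h] at htb
        exact htb.trans (min_le_right _ _)
    have hst : ε ≤ s - t := by linarith
    have hpos : 0 < s - t := by linarith
    have habs : |s - t| = s - t := abs_of_pos hpos
    have hsign : Real.sign (s - t) = 1 := Real.sign_of_pos hpos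
    have hltr : s - t < r := by
      rcases le_total τy (s - r) with h | h
      · exfalso
        have haty : a = τy := by rw [ha, min_eq_left h, max_eq_left hτy]
        have : t ≤ τy := htb.trans hbτ
        rw [haty] at hat; linarith
      · have hra : s - r ≤ a := by
          rw [ha]
          exact le_max_of_le_left (le_min h le_rfl)
        linarith
    simp only [dRcov, habs, hsign]
    by_cases hcase : s - t ≤ ε
    · have heq : s - t = ε := le_antisymm hcase hst
      rw [if_pos hcase, heq]; ring
    · rw [if_neg hcase, if_pos hltr]; ring
  have h3 : ∀ t ∈ Set.Ioc b τy, t ≠ s → dRcov ε r t s = -(1/ε - 1/r) := by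
    rintro t ⟨hbt, htτ⟩ hts
    have hts' : t < s := lt_of_le_of_ne (htτ.trans hτs) hts
    have hse : s - t ≤ ε := by
      rcases le_total τy (s - ε) with h | h
      · exfalso
        have hbty : b = τy := by rw [hb, min_eq_left h, max_eq_left hτy]
        rw [hbty] at hbt; linarith
      · have : s - ε ≤ b := by
          rw [hb]
          exact le_max_of_le_left (le_min h le_rfl)
        linarith
    have hpos : 0 < s - t := by linarith
    simp only [dRcov, abs_of_pos hpos, Real.sign_of_pos hpos]
    rw [if_pos hse]; ring
  -- the singleton {s} is null since η is continuous
  have hsing : η.measure {s} = 0 := by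
    rw [StieltjesFunction.measure_singleton]
    have : Function.leftLim (η : ℝ → ℝ) s = η s :=
      (hηm.continuousWithinAt_Iio_iff_leftLim_eq).1 hηc.continuousAt.continuousWithinAt
    simp [this]
  have hne : ∀ᵐ t ∂η.measure, t ≠ s := by
    rw [ae_iff]
    simpa [Set.setOf_eq_eq_singleton] using hsing
  have haes : ∀ᵐ t ∂(η.measure.restrict (Set.Ioc b τy)),
      dRcov ε r t s = -(1/ε - 1/r) := by
    filter_upwards [ae_restrict_mem measurableSet_Ioc, ae_restrict_of_ae hne] with t ht hts
    exact h3 t ht hts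
  -- integrability on the three pieces
  have fin : η.measure (Set.Ioc b τy) < ⊤ := by
    rw [η.measure_Ioc]; exact ENNReal.ofReal_lt_top
  have int1 : IntegrableOn (fun t => dRcov ε r t s) (Set.Ioc (0:ℝ) a) η.measure := by
    have : IntegrableOn (fun _ : ℝ => (0:ℝ)) (Set.Ioc (0:ℝ) a) η.measure := integrableOn_zero
    exact this.congr_fun (fun t ht => (h1 t ht).symm) measurableSet_Ioc
  have int2 : IntegrableOn (fun t => dRcov ε r t s) (Set.Ioc a b) η.measure := by
    rcases le_or_gt b a with h | h
    · rw [Set.Ioc_eq_empty (not_lt.2 h)]; exact integrableOn_empty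
    · have hb0 : 0 < b := lt_of_le_of_lt ha0 h
      have hbe : b ≤ s - ε := by
        rcases le_total (min τy (s - ε)) 0 with h' | h'
        · exfalso; rw [hb, max_eq_right h'] at hb0; exact lt_irrefl _ hb0
        · rw [hb, max_eq_left h']; exact min_le_right _ _
      have hcont : ContinuousOn (fun t : ℝ => -(1/(s - t) - 1/r)) (Set.Icc a b) := by
        apply ContinuousOn.neg
        apply ContinuousOn.sub _ continuousOn_const
        apply ContinuousOn.div continuousOn_const
        · exact (continuousOn_const.sub continuousOn_id)
        · intro t ht
          have : t ≤ b := ht.2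
          have : 0 < s - t := by linarith
          exact ne_of_gt this
      have : IntegrableOn (fun t : ℝ => -(1/(s - t) - 1/r)) (Set.Icc a b) η.measure :=
        hcont.integrableOn_compact isCompact_Icc
      exact (this.mono_set Set.Ioc_subset_Icc_self).congr_fun
        (fun t ht => (h2 t ht).symm) measurableSet_Ioc
  have int3 : IntegrableOn (fun t => dRcov ε r t s) (Set.Ioc b τy) η.measure := by
    have : IntegrableOn (fun _ : ℝ => -(1/ε - 1/r)) (Set.Ioc b τy) η.measure :=
      integrableOn_const fin.ne
    exact this.congr (Filter.EventuallyEq.symm haes)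
  -- split the integral
  have hsplit2 : Set.Ioc a τy = Set.Ioc a b ∪ Set.Ioc b τy :=
    (Set.Ioc_union_Ioc_eq_Ioc hab hbτ).symm
  have hsplit1 : Set.Ioc (0:ℝ) τy = Set.Ioc 0 a ∪ Set.Ioc a τy :=
    (Set.Ioc_union_Ioc_eq_Ioc ha0 haτ).symm
  have int23 : IntegrableOn (fun t => dRcov ε r t s) (Set.Ioc a τy) η.measure := by
    rw [hsplit2]; exact int2.union int3
  rw [hsplit1, setIntegral_union (Set.Ioc_disjoint_Ioc_of_le le_rfl) measurableSet_Ioc int1 int23,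
    hsplit2, setIntegral_union (Set.Ioc_disjoint_Ioc_of_le le_rfl) measurableSet_Ioc int2 int3]
  have e1 : (∫ t in Set.Ioc (0:ℝ) a, dRcov ε r t s ∂η.measure) = 0 := by
    rw [setIntegral_congr_fun measurableSet_Ioc h1, integral_zero]
  have e2 : (∫ t in Set.Ioc a b, dRcov ε r t s ∂η.measure)
      = -(∫ t in Set.Ioc a b, (1/(s - t) - 1/r) ∂η.measure) := by
    rw [setIntegral_congr_fun measurableSet_Ioc h2, integral_neg]
  have e3 : (∫ t in Set.Ioc b τy, dRcov ε r t s ∂η.measure)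
      = -(1/ε - 1/r) * (η τy - η b) := by
    rw [integral_congr_ae haes, setIntegral_const, measureReal_def, η.measure_Ioc,
      ENNReal.toReal_ofReal (sub_nonneg.2 (hηm hbτ)), smul_eq_mul]
    ring
  rw [e1, e2, e3]; ring
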